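/- Let n ≥ 2 and let f : F_2^n → F_2 be the Boolean function with f(x) = 1 if and only if x ≠ 0. Then the binary code C_f = { (s·f(x) + u·x)_{x ∈ F_2^n \ {0}} : s ∈ F_2, u ∈ F_2^n } is a [2^n - 1, n+1, 2^{n-1} - 1] binary linear code meeting the Griesmer bound with equality. -/
import Mathlib

section Aux

lemma zmod2_add_self (a : ZMod 2) : a + a = 0 := by revert a; decide

lemma zmod2_cases (a : ZMod 2) : a = 0 ∨ a = 1 := by revert a; decide

lemma sum_single {n : ℕ} (u : Fin n → ZMod 2) (j : Fin n) :
    ∑ i, u i * (Pi.single j 1 : Fin n → ZMod 2) i = u j := by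
  simp [Pi.single_apply, mul_ite, Finset.sum_ite_eq]

lemma single_ne_zero' {n : ℕ} (j : Fin n) : (Pi.single j 1 : Fin n → ZMod 2) ≠ 0 := by
  intro h
  have := congr_fun h j
  simp at this

lemma card_fiber {n : ℕ} (hn : 1 ≤ n) (u : Fin n → ZMod 2) (hu : u ≠ 0) (b : ZMod 2) :
    (Finset.univ.filter fun x : Fin n → ZMod 2 => ∑ i, u i * x i = b).card = 2^(n-1) := by
  obtain ⟨j, hj⟩ : ∃ j, u j ≠ 0 := by
    by_contra h
    push_neg at h
    exact hu (funext fun i => h i)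
  have huj : u j = 1 := (zmod2_cases (u j)).resolve_left hj
  set v : Fin n → ZMod 2 := Pi.single j 1 with hv
  have hvv : ∀ x : Fin n → ZMod 2, x + v + v = x := by
    intro x; rw [add_assoc]
    have : v + v = 0 := by
      funext i; exact CharTwo.add_self_eq_zero _
    rw [this, add_zero]
  have hsum : ∀ x : Fin n → ZMod 2, ∑ i, u i * (x + v) i = (∑ i, u i * x i) + 1 := by
    intro x
    simp only [Pi.add_apply, mul_add, Finset.sum_add_distrib]
    rw [sum_single u j, huj]
  have key : ∀ c : ZMod 2,
      (Finset.univ.filter fun x : Fin n → ZMod 2 => ∑ i, u i * x i = c).card =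
      (Finset.univ.filter fun x : Fin n → ZMod 2 => ∑ i, u i * x i = c + 1).card := by
    intro c
    apply Finset.card_bij' (fun x _ => x + v) (fun x _ => x + v)
    · intro a ha
      simp only [Finset.mem_filter, Finset.mem_univ, true_and] at ha ⊢
      rw [hsum, ha]
    · intro a ha
      simp only [Finset.mem_filter, Finset.mem_univ, true_and] at ha ⊢
      rw [hsum, ha, add_assoc]
      have : (1 : ZMod 2) + 1 = 0 := by decide
      rw [this, add_zero]
    · intro a _; exact hvv a
    · intro a _; exact hvv a
  have heq : (Finset.univ.filter fun a : Fin n → ZMod 2 => ¬ ∑ i, u i * a i = 0) =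
      (Finset.univ.filter fun x : Fin n → ZMod 2 => ∑ i, u i * x i = 1) := by
    apply Finset.filter_congr
    intro x _
    rcases zmod2_cases (∑ i, u i * x i) with h | h <;> simp [h]
  have htot := Finset.card_filter_add_card_filter_not
      (s := (Finset.univ : Finset (Fin n → ZMod 2)))
      (p := fun x => ∑ i, u i * x i = 0)
  rw [heq, Finset.card_univ] at htot
  have hcard : Fintype.card (Fin n → ZMod 2) = 2^n := by
    simp [Fintype.card_fun]
  rw [hcard] at htot
  have h01 := key 0
  norm_num at h01
  have hb : (Finset.univ.filter fun x : Fin n → ZMod 2 => ∑ i, u i * x i = b).card =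
      (Finset.univ.filter fun x : Fin n → ZMod 2 => ∑ i, u i * x i = 0).card := by
    rcases zmod2_cases b with rfl | rfl
    · rfl
    · rw [← h01]
  rw [hb]
  rw [← h01] at htot
  have hpow : 2^n = 2 * 2^(n-1) := by
    rw [← pow_succ']
    congr 1
    clear htot h01 hsum key heq hb hv hvv
    omega
  set a := (Finset.univ.filter fun x : Fin n → ZMod 2 => ∑ i, u i * x i = 0).card with ha
  clear h01 hsum key heq hb hv hvv ha
  clear_value a v
  clear hu hj huj u v b j
  omega

lemma subtype_filter_card {n : ℕ} (p : (Fin n → ZMod 2) → Prop) [DecidablePred p] :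
    (Finset.univ.filter (fun x : {x : Fin n → ZMod 2 // x ≠ 0} => p x.1)).card
    = (Finset.univ.filter (fun x : Fin n → ZMod 2 => x ≠ 0 ∧ p x)).card := by
  rw [← Fintype.card_subtype, ← Fintype.card_subtype]
  exact Fintype.card_congr (Equiv.subtypeSubtypeEquivSubtypeInter _ _)

lemma filter_zero_in {n : ℕ} (p : (Fin n → ZMod 2) → Prop) [DecidablePred p] (hp : p 0) :
    (Finset.univ.filter (fun x : Fin n → ZMod 2 => p x)).card
    = (Finset.univ.filter (fun x : Fin n → ZMod 2 => x ≠ 0 ∧ p x)).card + 1 := by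
  have h : (Finset.univ.filter (fun x : Fin n → ZMod 2 => p x))
      = insert 0 (Finset.univ.filter (fun x : Fin n → ZMod 2 => x ≠ 0 ∧ p x)) := by
    ext x
    simp only [Finset.mem_filter, Finset.mem_univ, true_and, Finset.mem_insert]
    constructor
    · intro hx
      by_cases h0 : x = 0
      · left; exact h0
      · right; exact ⟨h0, hx⟩
    · rintro (rfl | ⟨_, hx⟩)
      · exact hp
      · exact hx
  rw [h, Finset.card_insert_of_notMem]
  simp

lemma filter_zero_notin {n : ℕ} (p : (Fin n → ZMod 2) → Prop) [DecidablePred p] (hp : ¬ p 0) :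
    (Finset.univ.filter (fun x : Fin n → ZMod 2 => x ≠ 0 ∧ p x)).card
    = (Finset.univ.filter (fun x : Fin n → ZMod 2 => p x)).card := by
  congr 1
  ext x
  simp only [Finset.mem_filter, Finset.mem_univ, true_and]
  constructor
  · rintro ⟨_, hx⟩; exact hx
  · intro hx
    refine ⟨?_, hx⟩
    rintro rfl
    exact hp hx

lemma ceil_term (m i : ℕ) (hi : i ≤ m + 1) :
    ⌈((2^(m+1) - 1 : ℕ) : ℚ) / (2:ℚ) ^ (i+1)⌉ = (2^(m - i) : ℤ) := by
  have hd : ((2^(m+1) - 1 : ℕ) : ℚ) = 2^(m+1) - 1 := by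
    push_cast [Nat.one_le_two_pow]
    ring
  have hpos : (0:ℚ) < 2 ^ (i+1) := by positivity
  rw [hd, Int.ceil_eq_iff]
  push_cast
  constructor
  · rw [lt_div_iff₀ hpos]
    rcases le_or_gt i m with h | h
    · have he : m - i + (i+1) = m + 1 := by omega
      have h1 : ((2:ℚ)^(m-i) - 1) * 2^(i+1) = 2^(m+1) - 2^(i+1) := by
        rw [sub_mul, ← pow_add, he]; ring
      rw [h1]
      have h2 : (2:ℚ) ≤ 2^(i+1) := by
        calc (2:ℚ) = 2^1 := (pow_one 2).symm
        _ ≤ 2^(i+1) := by apply pow_le_pow_right₀ (by norm_num); omega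
      linarith
    · have h0 : m - i = 0 := by omega
      rw [h0, pow_zero]
      have h2 : (2:ℚ) ≤ 2^(m+1) := by
        calc (2:ℚ) = 2^1 := (pow_one 2).symm
        _ ≤ 2^(m+1) := by apply pow_le_pow_right₀ (by norm_num); omega
      simp
      linarith
  · rw [div_le_iff₀ hpos, ← pow_add]
    have h3 : m + 1 ≤ m - i + (i+1) := by omega
    have h2 : (2:ℚ)^(m+1) ≤ 2^(m-i+(i+1)) := pow_le_pow_right₀ (by norm_num) h3
    linarith

lemma geom2 (m : ℕ) : (Finset.range (m + 1)).sum (HPow.hPow (2:ℤ)) = 2 ^ (m + 1) - 1 := by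
  induction m with
  | zero => norm_num
  | succ k ih =>
    rw [Finset.sum_range_succ, ih]
    ring

lemma griesmer_sum (m : ℕ) :
    ∑ i ∈ Finset.range (m+3), ⌈((2^(m+1) - 1 : ℕ) : ℚ) / (2:ℚ) ^ i⌉ = ((2^(m+2) - 1 : ℕ) : ℤ) := by
  rw [Finset.sum_range_succ' (fun i => ⌈((2^(m+1) - 1 : ℕ) : ℚ) / (2:ℚ) ^ i⌉) (m+2)]
  have h0 : ⌈((2^(m+1) - 1 : ℕ) : ℚ) / (2:ℚ) ^ 0⌉ = ((2^(m+1) - 1 : ℕ) : ℤ) := by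
    rw [pow_zero, div_one]
    exact Int.ceil_natCast _
  rw [h0]
  have hterm : ∀ i ∈ Finset.range (m+2), ⌈((2^(m+1) - 1 : ℕ) : ℚ) / (2:ℚ) ^ (i+1)⌉ = (2^(m-i) : ℤ) := by
    intro i hi
    exact ceil_term m i (by simp at hi; omega)
  rw [Finset.sum_congr rfl hterm]
  rw [Finset.sum_range_succ]
  have hs : ∑ i ∈ Finset.range (m+1), (2^(m-i) : ℤ) = 2^(m+1) - 1 := by
    rw [← Finset.sum_range_reflect]
    have h : ∀ j ∈ Finset.range (m+1), (2:ℤ)^(m - (m + 1 - 1 - j)) = 2^j := by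
      intro j hj
      simp only [Finset.mem_range] at hj
      congr 1
      omega
    rw [Finset.sum_congr rfl h]
    exact geom2 m
  rw [hs]
  have h2 : (2:ℤ)^(m - (m+1)) = 1 := by
    have h : m - (m+1) = 0 := by omega
    rw [h, pow_zero]
  rw [h2]
  push_cast [Nat.one_le_two_pow]
  ring

end Aux

/-- Griesmer equality: a linear code of length `N`, dimension `k` and minimum distance
`d` over a field with `q` elements meets the Griesmer bound with equality if
`Σ_{i=0}^{k-1} ⌈d / q^i⌉ = N`. -/
def griesmerEq (q N k d : ℕ) : Prop :=
  ∑ i ∈ Finset.range k, ⌈(d : ℚ) / (q : ℚ) ^ i⌉ = (N : ℤ)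

/-- Let `n ≥ 2` and let `f : F_2^n → F_2` be the Boolean function with `f x = 1` iff
`x ≠ 0`.  Then the binary code
`C_f = { (s·f(x) + u·x)_{x ∈ F_2^n \ {0}} : s ∈ F_2, u ∈ F_2^n }`
is a `[2^n - 1, n+1, 2^(n-1) - 1]` binary linear code meeting the Griesmer bound
with equality. -/
theorem boolean_code_optimal (n : ℕ) (hn : 2 ≤ n)
    (f : (Fin n → ZMod 2) → ZMod 2) (hf : ∀ x, f x = 1 ↔ x ≠ 0)
    (C : Submodule (ZMod 2) ({x : Fin n → ZMod 2 // x ≠ 0} → ZMod 2))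
    (hC : (C : Set ({x : Fin n → ZMod 2 // x ≠ 0} → ZMod 2)) =
      {c | ∃ (s : ZMod 2) (u : Fin n → ZMod 2),
        c = fun x => s * f x.1 + ∑ i, u i * x.1 i}) :
    Fintype.card {x : Fin n → ZMod 2 // x ≠ 0} = 2 ^ n - 1 ∧
    Module.finrank (ZMod 2) C = n + 1 ∧
    (∀ c ∈ C, c ≠ 0 → 2 ^ (n - 1) - 1 ≤ hammingNorm c) ∧
    (∃ c ∈ C, c ≠ 0 ∧ hammingNorm c = 2 ^ (n - 1) - 1) ∧
    griesmerEq 2 (2 ^ n - 1) (n + 1) (2 ^ (n - 1) - 1) := by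
  have hn1 : 1 ≤ n := by omega
  -- Part 1: cardinality
  have hcard1 : Fintype.card {x : Fin n → ZMod 2 // x ≠ 0} = 2 ^ n - 1 := by
    have h := Fintype.card_subtype_compl (fun x : Fin n → ZMod 2 => x = 0)
    simp only [Fintype.card_subtype_eq] at h
    have hcard : Fintype.card (Fin n → ZMod 2) = 2^n := by
      simp [Fintype.card_fun]
    rw [hcard] at h
    convert h using 2
  -- weight formula
  have hW : ∀ (s : ZMod 2) (u : Fin n → ZMod 2),
      hammingNorm (fun x : {x : Fin n → ZMod 2 // x ≠ 0} => s * f x.1 + ∑ i, u i * x.1 i)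
      = (Finset.univ.filter fun x : Fin n → ZMod 2 => x ≠ 0 ∧ s + ∑ i, u i * x i ≠ 0).card := by
    intro s u
    have he : (fun x : {x : Fin n → ZMod 2 // x ≠ 0} => s * f x.1 + ∑ i, u i * x.1 i)
        = fun x => s + ∑ i, u i * x.1 i := by
      funext x
      rw [(hf x.1).mpr x.2, mul_one]
    rw [he]
    unfold hammingNorm
    rw [show (Finset.filter (fun i => (fun x : {x : Fin n → ZMod 2 // x ≠ 0} => s + ∑ i, u i * x.1 i) i ≠ 0) Finset.univ) = (Finset.filter (fun x : {x : Fin n → ZMod 2 // x ≠ 0} => s + ∑ i, u i * x.1 i ≠ 0) Finset.univ) from Finset.filter_congr_decidable _ _ _]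
    exact subtype_filter_card (fun x => s + ∑ i, u i * x i ≠ 0)
  -- weight computations
  have w0 : ∀ u : Fin n → ZMod 2, u ≠ 0 →
      (Finset.univ.filter fun x : Fin n → ZMod 2 => x ≠ 0 ∧ (0:ZMod 2) + ∑ i, u i * x i ≠ 0).card
      = 2^(n-1) := by
    intro u hu
    have hfe : (Finset.univ.filter fun x : Fin n → ZMod 2 => x ≠ 0 ∧ (0:ZMod 2) + ∑ i, u i * x i ≠ 0)
        = (Finset.univ.filter fun x : Fin n → ZMod 2 => x ≠ 0 ∧ ∑ i, u i * x i = 1) := by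
      apply Finset.filter_congr
      intro x _
      apply and_congr_right
      intro _
      rcases zmod2_cases (∑ i, u i * x i) with h | h <;> simp [h, show (1:ZMod 2)+1 = 0 from rfl]
    rw [hfe, filter_zero_notin _ (by simp)]
    exact card_fiber hn1 u hu 1
  have w1 : ∀ u : Fin n → ZMod 2, u ≠ 0 →
      (Finset.univ.filter fun x : Fin n → ZMod 2 => x ≠ 0 ∧ (1:ZMod 2) + ∑ i, u i * x i ≠ 0).card
      = 2^(n-1) - 1 := by
    intro u hu
    have hfe : (Finset.univ.filter fun x : Fin n → ZMod 2 => x ≠ 0 ∧ (1:ZMod 2) + ∑ i, u i * x i ≠ 0)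
        = (Finset.univ.filter fun x : Fin n → ZMod 2 => x ≠ 0 ∧ ∑ i, u i * x i = 0) := by
      apply Finset.filter_congr
      intro x _
      apply and_congr_right
      intro _
      rcases zmod2_cases (∑ i, u i * x i) with h | h <;> simp [h, show (1:ZMod 2)+1 = 0 from rfl]
    rw [hfe]
    have h1 := filter_zero_in (fun x : Fin n → ZMod 2 => ∑ i, u i * x i = 0) (by simp)
    rw [card_fiber hn1 u hu 0] at h1
    exact Nat.eq_sub_of_add_eq h1.symm
  have wall : (Finset.univ.filter fun x : Fin n → ZMod 2 =>
      x ≠ 0 ∧ (1:ZMod 2) + ∑ i, (0:Fin n → ZMod 2) i * x i ≠ 0).card = 2^n - 1 := by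
    have hfe : (Finset.univ.filter fun x : Fin n → ZMod 2 =>
        x ≠ 0 ∧ (1:ZMod 2) + ∑ i, (0:Fin n → ZMod 2) i * x i ≠ 0)
        = (Finset.univ.filter fun x : Fin n → ZMod 2 => x ≠ 0) := by
      apply Finset.filter_congr
      intro x _
      simp
    rw [hfe, ← Fintype.card_subtype]
    exact hcard1
  -- the linear parametrization
  let L : (ZMod 2 × (Fin n → ZMod 2)) →ₗ[ZMod 2] ({x : Fin n → ZMod 2 // x ≠ 0} → ZMod 2) :=
    { toFun := fun p x => p.1 * f x.1 + ∑ i, p.2 i * x.1 i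
      map_add' := by
        intro p q
        funext x
        simp only [Prod.fst_add, Prod.snd_add, Pi.add_apply, add_mul, Finset.sum_add_distrib]
        ring
      map_smul' := by
        intro c p
        funext x
        simp only [Prod.smul_fst, Prod.smul_snd, Pi.smul_apply, smul_eq_mul, RingHom.id_apply,
          Finset.mul_sum, mul_assoc]
        rw [mul_add, Finset.mul_sum] }
  have hrange : LinearMap.range L = C := by
    ext c
    rw [LinearMap.mem_range, ← SetLike.mem_coe, hC]
    constructor
    · rintro ⟨⟨s, u⟩, rfl⟩
      exact ⟨s, u, rfl⟩
    · rintro ⟨s, u, rfl⟩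
      exact ⟨(s, u), rfl⟩
  have hinj : Function.Injective L := by
    rw [← LinearMap.ker_eq_bot, LinearMap.ker_eq_bot']
    rintro ⟨s, u⟩ hp
    have hev : ∀ x : Fin n → ZMod 2, x ≠ 0 → s + ∑ i, u i * x i = 0 := by
      intro x hx
      have h := congr_fun hp ⟨x, hx⟩
      simpa [L, (hf x).mpr hx] using h
    by_cases hu : u = 0
    · subst hu
      have h0 := hev (Pi.single ⟨0, lt_of_lt_of_le (by norm_num) hn⟩ 1) (single_ne_zero' _)
      simp at h0
      simp [h0, Prod.ext_iff]
    · exfalso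
      obtain ⟨j, hj⟩ : ∃ j, u j ≠ 0 := by
        by_contra h
        push_neg at h
        exact hu (funext fun i => h i)
      have huj : u j = 1 := (zmod2_cases (u j)).resolve_left hj
      have h1 := hev (Pi.single j 1) (single_ne_zero' j)
      rw [sum_single, huj] at h1
      have hnt : Nontrivial (Fin n) := Fin.nontrivial_iff_two_le.mpr hn
      obtain ⟨k, hk⟩ := exists_ne j
      rcases zmod2_cases (u k) with hk0 | hk1
      · have h2 := hev (Pi.single k 1) (single_ne_zero' k)
        rw [sum_single, hk0, add_zero] at h2
        rw [h2, zero_add] at h1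
        exact one_ne_zero h1
      · have hx : (Pi.single j 1 + Pi.single k 1 : Fin n → ZMod 2) ≠ 0 := by
          intro h
          have h' := congr_fun h j
          have hjk : j ≠ k := Ne.symm hk
          simp [Pi.single_apply, hjk] at h'
        have h2 := hev _ hx
        simp only [Pi.add_apply, mul_add, Finset.sum_add_distrib, sum_single] at h2
        rw [huj, hk1] at h2
        have : (1:ZMod 2) + 1 = 0 := by decide
        rw [this, add_zero] at h2
        rw [h2, zero_add] at h1
        exact one_ne_zero h1
  have hfr : Module.finrank (ZMod 2) C = n + 1 := by
    rw [← hrange, LinearMap.finrank_range_of_inj hinj]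
    rw [Module.finrank_prod, Module.finrank_self, Module.finrank_fintype_fun_eq_card]
    simp [Nat.add_comm]
  refine ⟨hcard1, hfr, ?_, ?_, ?_⟩
  · -- minimum distance lower bound
    intro c hc hc0
    rw [← SetLike.mem_coe, hC] at hc
    obtain ⟨s, u, rfl⟩ := hc
    rw [hW s u]
    by_cases hu : u = 0
    · subst hu
      rcases zmod2_cases s with rfl | rfl
      · exfalso
        apply hc0
        funext x
        simp
      · rw [wall]
        have h := Nat.pow_le_pow_right (by norm_num : 1 ≤ 2) (Nat.sub_le n 1)
        exact Nat.sub_le_sub_right h 1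
    · rcases zmod2_cases s with rfl | rfl
      · rw [w0 u hu]
        exact Nat.sub_le _ _
      · rw [w1 u hu]
  · -- existence of a minimum-weight codeword
    set j0 : Fin n := ⟨0, lt_of_lt_of_le (by norm_num) hn⟩
    refine ⟨fun x => (1:ZMod 2) * f x.1 + ∑ i, (Pi.single j0 1 : Fin n → ZMod 2) i * x.1 i,
      ?_, ?_, ?_⟩
    · rw [← SetLike.mem_coe, hC]
      exact ⟨1, Pi.single j0 1, rfl⟩
    · rw [← hammingNorm_pos_iff, hW 1 _, w1 _ (single_ne_zero' j0)]
      have h2 : 2 ≤ 2^(n-1) := by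
        calc 2 = 2^1 := (pow_one 2).symm
        _ ≤ 2^(n-1) := Nat.pow_le_pow_right (by norm_num) (Nat.le_sub_one_of_lt hn)
      exact Nat.sub_pos_of_lt h2
    · rw [hW 1 _, w1 _ (single_ne_zero' j0)]
  · -- Griesmer equality
    obtain ⟨m, hm⟩ : ∃ m, n = m + 2 := ⟨n - 2, (Nat.sub_add_cancel hn).symm⟩
    subst hm
    unfold griesmerEq
    have h1 : m + 2 - 1 = m + 1 := rfl
    rw [h1]
    have := griesmer_sum m
    simpa using this
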